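/- Let H, K, F be real separable Hilbert spaces, Z : H → K a bounded linear operator, and P the orthogonal projection on H whose range equals the closure of the range of Z^*. Then for any bounded linear operator G : F → H and any λ > 0, ‖(I − P)G‖ ≤ λ^{1/2} ‖(Z^*Z + λI)^{-1/2} G‖. -/

import Mathlib

open ContinuousLinearMap

open scoped RealInnerProductSpace

/-- `S` is the inverse `T⁻¹` of the operator `T`. -/
def IsInvOf {E : Type*} [NormedAddCommGroup E] [InnerProductSpace ℝ E]
    [CompleteSpace E] (S T : E →L[ℝ] E) : Prop :=
  S ∘L T = 1 ∧ T ∘L S = 1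

/-- `S` is the inverse square root `T^{-1/2}` of the positive invertible operator `T`,
i.e. `S` is positive and `S ∘ S = T⁻¹`. -/
def IsInvSqrtOf {E : Type*} [NormedAddCommGroup E] [InnerProductSpace ℝ E]
    [CompleteSpace E] (S T : E →L[ℝ] E) : Prop :=
  S.IsPositive ∧ IsInvOf (S ∘L S) T

/-- Let `Z : H → K` be bounded, `P` the orthogonal projection of `H` onto the
closure of the range of `Z^*`, `G : F → H` bounded and `lam > 0`. Then
`‖(I − P) G‖ ≤ lam^{1/2} ‖(Z^* Z + lam I)^{-1/2} G‖`. -/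
theorem stmt1 {H K F : Type*}
    [NormedAddCommGroup H] [InnerProductSpace ℝ H] [CompleteSpace H]
    [TopologicalSpace.SeparableSpace H]
    [NormedAddCommGroup K] [InnerProductSpace ℝ K] [CompleteSpace K]
    [TopologicalSpace.SeparableSpace K]
    [NormedAddCommGroup F] [InnerProductSpace ℝ F] [CompleteSpace F]
    [TopologicalSpace.SeparableSpace F]
    (Z : H →L[ℝ] K) (G : F →L[ℝ] H) (lam : ℝ) (hlam : 0 < lam)
    (P : H →L[ℝ] H) (hPproj : P ∘L P = P) (hPsa : IsSelfAdjoint P)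
    (hPrange : LinearMap.range (P : H →ₗ[ℝ] H) = (LinearMap.range (adjoint Z : K →ₗ[ℝ] H)).topologicalClosure)
    (S : H →L[ℝ] H)
    (hS : IsInvSqrtOf S ((adjoint Z) ∘L Z + lam • (1 : H →L[ℝ] H))) :
    ‖(1 - P) ∘L G‖ ≤ Real.sqrt lam * ‖S ∘L G‖ := by
  obtain ⟨hSpos, hST, hTS⟩ := hS
  have hSadj : adjoint S = S := ContinuousLinearMap.isSelfAdjoint_iff'.mp hSpos.isSelfAdjoint
  have hPadj : adjoint P = P := ContinuousLinearMap.isSelfAdjoint_iff'.mp hPsa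
  have hSinner : ∀ x y : H, ⟪S x, y⟫ = ⟪x, S y⟫ := fun x y => by
    conv_lhs => rw [← hSadj]
    exact ContinuousLinearMap.adjoint_inner_left S y x
  apply opNorm_le_bound _ (by positivity)
  intro f
  set u : H := ((1 - P) ∘L G) f with hu
  have hPu : P u = 0 := by
    have h1 : P u = (P ∘L (1 - P)) (G f) := rfl
    rw [h1, comp_sub, hPproj]
    simp
  -- inner of u with anything in range of P is 0
  have hPinner : ∀ y : H, ⟪u, P y⟫ = 0 := fun y => by
    conv_lhs => rw [← hPadj]
    rw [ContinuousLinearMap.adjoint_inner_right, hPu, inner_zero_left]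
  -- Z u = 0
  have hZu : Z u = 0 := by
    rw [← inner_self_eq_zero (𝕜 := ℝ)]
    have hmem : adjoint Z (Z u) ∈ LinearMap.range (P : H →ₗ[ℝ] H) := by
      rw [hPrange]
      exact (LinearMap.range (adjoint Z : K →ₗ[ℝ] H)).le_topologicalClosure ⟨Z u, rfl⟩
    obtain ⟨v, hv⟩ := hmem
    calc ⟪Z u, Z u⟫ = ⟪u, adjoint Z (Z u)⟫ :=
          (ContinuousLinearMap.adjoint_inner_right Z u (Z u)).symm
      _ = ⟪u, P v⟫ := by rw [← ContinuousLinearMap.coe_coe P, hv]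
      _ = 0 := hPinner v
  -- ⟪u, Z^* y⟫ = 0
  have hZadj : ∀ y : K, ⟪u, adjoint Z y⟫ = 0 := fun y => by
    rw [ContinuousLinearMap.adjoint_inner_right, hZu, inner_zero_left]
  -- S (S u) = lam⁻¹ • u
  have hSSu : S (S u) = lam⁻¹ • u := by
    have h1 : ((S ∘L S) ∘L ((adjoint Z) ∘L Z + lam • (1 : H →L[ℝ] H))) u = u := by
      rw [hST]; rfl
    have h2 : ((adjoint Z) ∘L Z + lam • (1 : H →L[ℝ] H)) u = lam • u := by
      simp [ContinuousLinearMap.add_apply, ContinuousLinearMap.comp_apply, hZu]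
    have h3 : lam • S (S u) = u := by
      rw [ContinuousLinearMap.comp_apply, h2] at h1
      simpa using h1
    have := congrArg (fun x => lam⁻¹ • x) h3
    simpa [smul_smul, inv_mul_cancel₀ hlam.ne'] using this
  -- ‖S u‖² = lam⁻¹ ‖u‖²
  have hSu_norm : ‖S u‖ ^ 2 = lam⁻¹ * ‖u‖ ^ 2 := by
    calc ‖S u‖ ^ 2 = ⟪S u, S u⟫ := (real_inner_self_eq_norm_sq _).symm
      _ = ⟪u, S (S u)⟫ := hSinner u (S u)
      _ = lam⁻¹ * ⟪u, u⟫ := by rw [hSSu, real_inner_smul_right]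
      _ = lam⁻¹ * ‖u‖ ^ 2 := by rw [real_inner_self_eq_norm_sq]
  have hSu : ‖S u‖ = Real.sqrt lam⁻¹ * ‖u‖ := by
    nlinarith [Real.sq_sqrt (inv_nonneg.mpr hlam.le), hSu_norm,
      Real.sqrt_nonneg lam⁻¹, norm_nonneg u, norm_nonneg (S u),
      mul_nonneg (Real.sqrt_nonneg lam⁻¹) (norm_nonneg u)]
  -- key identity: G f = Z^*(Z (S² G f)) + lam • S² G f
  have hGf : adjoint Z (Z (S (S (G f)))) + lam • S (S (G f)) = G f := by
    have h1 : (((adjoint Z) ∘L Z + lam • (1 : H →L[ℝ] H)) ∘L (S ∘L S)) (G f) = G f := by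
      rw [hTS]; rfl
    simpa [ContinuousLinearMap.add_apply, ContinuousLinearMap.comp_apply] using h1
  have hkey : ‖u‖ ^ 2 = lam * ⟪S u, S (G f)⟫ := by
    have huu : ⟪u, G f⟫ = ‖u‖ ^ 2 := by
      have hGf2 : G f = u + P (G f) := by
        simp [hu, ContinuousLinearMap.comp_apply, ContinuousLinearMap.sub_apply]
      rw [hGf2, inner_add_right, hPinner, real_inner_self_eq_norm_sq]
      ring
    calc ‖u‖ ^ 2 = ⟪u, G f⟫ := huu.symm
      _ = ⟪u, adjoint Z (Z (S (S (G f)))) + lam • S (S (G f))⟫ := by rw [hGf]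
      _ = lam * ⟪u, S (S (G f))⟫ := by
          rw [inner_add_right, hZadj, real_inner_smul_right]; ring
      _ = lam * ⟪S u, S (G f)⟫ := by rw [← hSinner]
  -- conclude
  have hCS : ⟪S u, S (G f)⟫ ≤ ‖S u‖ * ‖S (G f)‖ := real_inner_le_norm _ _
  have hls : lam * Real.sqrt lam⁻¹ = Real.sqrt lam := by
    rw [Real.sqrt_inv]
    have h := Real.mul_self_sqrt hlam.le
    have hs : Real.sqrt lam ≠ 0 := by positivity
    field_simp
    rw [sq, h]
  have hbound : ‖u‖ ^ 2 ≤ Real.sqrt lam * ‖u‖ * ‖S (G f)‖ := by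
    calc ‖u‖ ^ 2 = lam * ⟪S u, S (G f)⟫ := hkey
      _ ≤ lam * (‖S u‖ * ‖S (G f)‖) := mul_le_mul_of_nonneg_left hCS hlam.le
      _ = lam * Real.sqrt lam⁻¹ * ‖u‖ * ‖S (G f)‖ := by rw [hSu]; ring
      _ = Real.sqrt lam * ‖u‖ * ‖S (G f)‖ := by rw [hls]
  have hSGf : ‖S (G f)‖ ≤ ‖S ∘L G‖ * ‖f‖ := (S ∘L G).le_opNorm f
  have hfin : ‖u‖ ≤ Real.sqrt lam * ‖S (G f)‖ := by
    rcases eq_or_lt_of_le (norm_nonneg u) with h0 | h0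
    · rw [← h0]; positivity
    · have : ‖u‖ * ‖u‖ ≤ (Real.sqrt lam * ‖S (G f)‖) * ‖u‖ := by nlinarith
      exact le_of_mul_le_mul_right this h0
  calc ‖((1 - P) ∘L G) f‖ = ‖u‖ := rfl
    _ ≤ Real.sqrt lam * ‖S (G f)‖ := hfin
    _ ≤ Real.sqrt lam * (‖S ∘L G‖ * ‖f‖) :=
        mul_le_mul_of_nonneg_left hSGf (Real.sqrt_nonneg _)
    _ = Real.sqrt lam * ‖S ∘L G‖ * ‖f‖ := by ring
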